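/- The partial order ⪯ on the monoid Γ is compatible with multiplication: if [u] ⪯ [v] then [w][u] ⪯ [w][v] and [u][w] ⪯ [v][w] for all reduced u, v, w. -/

import Mathlib

structure Letter (N : ℕ) where
  lo : ℕ
  hi : ℕ
  lo_le_hi : lo ≤ hi
  hi_le : hi ≤ N

namespace PS

/-- `t` is a (non-strict) subletter of `s`. -/
def Sub {N : ℕ} (t s : Letter N) : Prop := s.lo ≤ t.lo ∧ t.hi ≤ s.hi

/-- `t` is a proper subletter of `s`. -/
def PSub {N : ℕ} (t s : Letter N) : Prop := Sub t s ∧ t ≠ s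

/-- Two letters commute iff they have distance at least 2. -/
def Comm {N : ℕ} (s t : Letter N) : Prop := s.hi + 2 ≤ t.lo ∨ t.hi + 2 ≤ s.lo

abbrev Word (N : ℕ) := List (Letter N)

/-- Commutation step: swap two adjacent commuting letters. -/
def SwapStep {N : ℕ} (u v : Word N) : Prop :=
  ∃ (x y : Word N) (s t : Letter N),
    Comm s t ∧ u = x ++ s :: t :: y ∧ v = x ++ t :: s :: y

/-- Cancellation step: replace an occurrence `s·t` or `t·s` by `s`, when `t ⊆ s`. -/
def CancelStep {N : ℕ} (u v : Word N) : Prop :=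
  ∃ (x y : Word N) (s t : Letter N),
    Sub t s ∧ (u = x ++ s :: t :: y ∨ u = x ++ t :: s :: y) ∧ v = x ++ s :: y

/-- Splitting step: replace an occurrence `s·s` by a (possibly empty) product of
proper subletters of `s`. -/
def SplitStep {N : ℕ} (u v : Word N) : Prop :=
  ∃ (x y : Word N) (s : Letter N) (l : Word N),
    (∀ t ∈ l, PSub t s) ∧ u = x ++ s :: s :: y ∧ v = x ++ l ++ y

/-- Commutation-equivalence of words. -/
def WEquiv {N : ℕ} : Word N → Word N → Prop := Relation.ReflTransGen SwapStep

/-- Reduction: finitely many commutation and cancellation steps. -/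
def Red {N : ℕ} : Word N → Word N → Prop :=
  Relation.ReflTransGen (fun u v => SwapStep u v ∨ CancelStep u v)

/-- Strong reduction: also allowing splitting steps. -/
def SRed {N : ℕ} : Word N → Word N → Prop :=
  Relation.ReflTransGen (fun u v => SwapStep u v ∨ CancelStep u v ∨ SplitStep u v)

/-- The congruence defining the monoid Γ. -/
def GammaRel {N : ℕ} : Word N → Word N → Prop :=
  Relation.EqvGen (fun u v => SwapStep u v ∨ CancelStep u v)

/-- A word is reduced if there is no pair of occurrences `i ≠ j` with `sᵢ ⊆ sⱼ`
such that `sᵢ` commutes with every letter strictly between them. -/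
def Reduced {N : ℕ} (w : Word N) : Prop :=
  ¬ ∃ (x y z : Word N) (a b : Letter N),
      w = x ++ a :: (y ++ b :: z) ∧
      ((Sub a b ∧ ∀ r ∈ y, Comm a r) ∨ (Sub b a ∧ ∀ r ∈ y, Comm b r))

/-- The letter `s` is left-absorbed by the word `v`. -/
def LAbsLetter {N : ℕ} (s : Letter N) (v : Word N) : Prop :=
  ∃ (x : Word N) (t : Letter N) (y : Word N),
    v = x ++ t :: y ∧ Sub s t ∧ ∀ r ∈ x, Comm s r

/-- The letter `s` is properly left-absorbed by the word `v`. -/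
def PLAbsLetter {N : ℕ} (s : Letter N) (v : Word N) : Prop :=
  ∃ (x : Word N) (t : Letter N) (y : Word N),
    v = x ++ t :: y ∧ PSub s t ∧ ∀ r ∈ x, Comm s r

/-- The letter `s` is right-absorbed by the word `w`. -/
def RAbsLetter {N : ℕ} (s : Letter N) (w : Word N) : Prop :=
  ∃ (x : Word N) (t : Letter N) (y : Word N),
    w = x ++ t :: y ∧ Sub s t ∧ ∀ r ∈ y, Comm s r

/-- The letter `s` is properly right-absorbed by the word `w`. -/
def PRAbsLetter {N : ℕ} (s : Letter N) (w : Word N) : Prop :=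
  ∃ (x : Word N) (t : Letter N) (y : Word N),
    w = x ++ t :: y ∧ PSub s t ∧ ∀ r ∈ y, Comm s r

/-- The word `u` is left-absorbed by `v`. -/
def LAbsWord {N : ℕ} (u v : Word N) : Prop := ∀ s ∈ u, LAbsLetter s v

/-- `v` bites `u` from the right: `v` left-absorbs some letter of the final segment of `u`. -/
def BitesRight {N : ℕ} (v u : Word N) : Prop :=
  ∃ (x : Word N) (s : Letter N) (y : Word N),
    u = x ++ s :: y ∧ (∀ r ∈ y, Comm s r) ∧ LAbsLetter s v

end PS

namespace PS

/-- `Repl v u b`: `u` is obtained from `v` by keeping some letters and replacing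
others by (possibly empty) products of proper subletters; `b = true` iff at least
one replacement occurred. -/
inductive Repl {N : ℕ} : Word N → Word N → Bool → Prop
  | nil : Repl [] [] false
  | keep {v u : Word N} {b : Bool} (s : Letter N) :
      Repl v u b → Repl (s :: v) (s :: u) b
  | split {v u : Word N} {b : Bool} (s : Letter N) (l : Word N)
      (hl : ∀ t ∈ l, PSub t s) :
      Repl v u b → Repl (s :: v) (l ++ u) true

/-- `u ≺ v`: some commutation-permutation of `u` is obtained from `v` by replacing
at least one letter of `v` by a product of proper subletters. -/
def Prec {N : ℕ} (u v : Word N) : Prop :=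
  ∃ u' : Word N, WEquiv u u' ∧ Repl v u' true

/-- `u ⪯ v`. -/
def Preceq {N : ℕ} (u v : Word N) : Prop := Prec u v ∨ WEquiv u v

end PS

namespace PS

variable {N : ℕ}

/-! ### Letters -/

theorem Letter.ext' {a b : Letter N} (h1 : a.lo = b.lo) (h2 : a.hi = b.hi) : a = b := by
  cases a; cases b; simp_all

theorem Sub.rfl' {s : Letter N} : Sub s s := ⟨le_rfl, le_rfl⟩

theorem Sub.trans' {a b c : Letter N} (h1 : Sub a b) (h2 : Sub b c) : Sub a c :=
  ⟨le_trans h2.1 h1.1, le_trans h1.2 h2.2⟩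

theorem Sub.antisymm' {a b : Letter N} (h1 : Sub a b) (h2 : Sub b a) : a = b :=
  Letter.ext' (le_antisymm h2.1 h1.1) (le_antisymm h1.2 h2.2)

theorem psub_sub {r t s : Letter N} (h1 : PSub r t) (h2 : Sub t s) : PSub r s := by
  refine ⟨h1.1.trans' h2, ?_⟩
  rintro rfl
  exact h1.2 (Sub.antisymm' h1.1 h2)

theorem Comm.symm' {s t : Letter N} (h : Comm s t) : Comm t s := Or.symm h

theorem comm_shrink_right {s t a : Letter N} (ha : Sub a t) (h : Comm s t) : Comm s a := by
  obtain ⟨h1, h2⟩ := ha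
  rcases h with h | h
  · exact Or.inl (by omega)
  · exact Or.inr (by omega)

theorem comm_shrink_left {s t a : Letter N} (ha : Sub a s) (h : Comm s t) : Comm a t :=
  (comm_shrink_right ha h.symm').symm'

theorem comm_shrink {s t a b : Letter N} (ha : Sub a s) (hb : Sub b t) (h : Comm s t) :
    Comm a b :=
  comm_shrink_right hb (comm_shrink_left ha h)

/-! ### List decomposition helper -/

theorem cons_middle_cases {α : Type*} {X x : List α} {a c : α} {R r : List α}
    (h : X ++ a :: R = x ++ c :: r) :
    (X = x ∧ a = c ∧ R = r) ∨
    (∃ m, x = X ++ a :: m ∧ R = m ++ c :: r) ∨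
    (∃ m, X = x ++ c :: m ∧ r = m ++ a :: R) := by
  rcases List.append_eq_append_iff.mp h with ⟨m, hm1, hm2⟩ | ⟨m, hm1, hm2⟩
  · cases m with
    | nil =>
      simp only [List.append_nil] at hm1
      obtain ⟨rfl, rfl⟩ := List.cons.injEq .. ▸ (by simpa using hm2 : a = c ∧ R = r)
      exact Or.inl ⟨hm1.symm, rfl, rfl⟩
    | cons d m =>
      obtain ⟨rfl, hR⟩ : a = d ∧ R = m ++ c :: r := by simpa using hm2
      exact Or.inr (Or.inl ⟨m, hm1, hR⟩)
  · cases m with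
    | nil =>
      simp only [List.append_nil] at hm1
      obtain ⟨rfl, hR⟩ : c = a ∧ r = R := by simpa using hm2
      exact Or.inl ⟨hm1, rfl, hR.symm⟩
    | cons d m =>
      obtain ⟨rfl, hR⟩ : c = d ∧ r = m ++ a :: R := by simpa using hm2
      exact Or.inr (Or.inr ⟨m, hm1, hR⟩)

/-! ### WEquiv basics -/

theorem SwapStep.symm' {u v : Word N} (h : SwapStep u v) : SwapStep v u := by
  obtain ⟨x, y, s, t, hc, hu, hv⟩ := h
  exact ⟨x, y, t, s, hc.symm', hv, hu⟩

theorem WEquiv.refl' (w : Word N) : WEquiv w w := Relation.ReflTransGen.refl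

theorem WEquiv.symm' {u v : Word N} (h : WEquiv u v) : WEquiv v u :=
  (@Relation.ReflTransGen.stdSymm _ _ ⟨fun _ _ hh => SwapStep.symm' hh⟩).symm _ _ h

theorem WEquiv.trans' {u v w : Word N} (h1 : WEquiv u v) (h2 : WEquiv v w) : WEquiv u w :=
  Relation.ReflTransGen.trans h1 h2

theorem wequiv_single {u v : Word N} (h : SwapStep u v) : WEquiv u v :=
  Relation.ReflTransGen.single h

theorem swapstep_append_left (w : Word N) {u v : Word N} (h : SwapStep u v) :
    SwapStep (w ++ u) (w ++ v) := by
  obtain ⟨x, y, s, t, hc, hu, hv⟩ := h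
  exact ⟨w ++ x, y, s, t, hc, by rw [hu, List.append_assoc], by rw [hv, List.append_assoc]⟩

theorem swapstep_append_right (w : Word N) {u v : Word N} (h : SwapStep u v) :
    SwapStep (u ++ w) (v ++ w) := by
  obtain ⟨x, y, s, t, hc, hu, hv⟩ := h
  exact ⟨x, y ++ w, s, t, hc, by rw [hu]; simp, by rw [hv]; simp⟩

theorem wequiv_append_left (w : Word N) {u v : Word N} (h : WEquiv u v) :
    WEquiv (w ++ u) (w ++ v) :=
  Relation.ReflTransGen.lift _ (fun _ _ hh => swapstep_append_left w hh) _ _ h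

theorem wequiv_append_right (w : Word N) {u v : Word N} (h : WEquiv u v) :
    WEquiv (u ++ w) (v ++ w) :=
  Relation.ReflTransGen.lift _ (fun _ _ hh => swapstep_append_right w hh) _ _ h

theorem wequiv_letter_block (x y Q : Word N) (s : Letter N) (h : ∀ q ∈ Q, Comm s q) :
    WEquiv (x ++ s :: (Q ++ y)) (x ++ Q ++ s :: y) := by
  induction Q generalizing x with
  | nil => simpa using WEquiv.refl' _
  | cons q Q ih =>
    have h1 : SwapStep (x ++ s :: (q :: Q ++ y)) (x ++ q :: (s :: (Q ++ y))) :=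
      ⟨x, Q ++ y, s, q, h q (by simp), by simp, by simp⟩
    refine Relation.ReflTransGen.head h1 ?_
    have := ih (x ++ [q]) (fun r hr => h r (by simp [hr]))
    simpa [WEquiv] using this

theorem wequiv_block_swap (x y P Q : Word N)
    (h : ∀ p ∈ P, ∀ q ∈ Q, Comm p q) :
    WEquiv (x ++ (P ++ (Q ++ y))) (x ++ (Q ++ (P ++ y))) := by
  induction P generalizing x with
  | nil => simpa using WEquiv.refl' _
  | cons p P ih =>
    have e1 := ih (x ++ [p]) (fun r hr q hq => h r (by simp [hr]) q hq)
    have e2 := wequiv_letter_block x (P ++ y) Q p (fun q hq => h p (by simp) q hq)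
    refine WEquiv.trans' (v := x ++ p :: (Q ++ (P ++ y))) ?_ ?_
    · simpa using e1
    · simpa using e2

end PS
namespace PS

variable {N : ℕ}

/-! ### Reduced is invariant under swaps -/

theorem not_reduced_adj {w A C : Word N} {p q : Letter N}
    (hw : w = A ++ p :: q :: C) (hpq : Sub p q ∨ Sub q p) : ¬ Reduced w := by
  rw [Reduced, not_not]
  refine ⟨A, [], C, p, q, by simpa using hw, ?_⟩
  rcases hpq with h | h
  · exact Or.inl ⟨h, by simp⟩
  · exact Or.inr ⟨h, by simp⟩

theorem not_reduced_of_swap {w w' : Word N} (h : SwapStep w w') (h' : ¬ Reduced w') :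
    ¬ Reduced w := by
  obtain ⟨x, y0, s, t, hc, hw, hw'⟩ := h
  rw [Reduced, not_not] at h' ⊢
  obtain ⟨X, Y, Z, a, b, heq, hcond⟩ := h'
  rw [hw'] at heq
  subst hw
  rcases cons_middle_cases heq.symm with ⟨rfl, rfl, hR⟩ | ⟨m, hm1, hm2⟩ | ⟨m, hm1, hm2⟩
  · -- a = t at the left swap position
    cases Y with
    | nil =>
      simp only [List.nil_append, List.cons.injEq] at hR
      obtain ⟨rfl, rfl⟩ := hR
      refine ⟨X, [], Z, b, a, by simp, ?_⟩
      rcases hcond with ⟨h1, _⟩ | ⟨h1, _⟩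
      · exact Or.inr ⟨h1, by simp⟩
      · exact Or.inl ⟨h1, by simp⟩
    | cons r Y' =>
      simp only [List.cons_append, List.cons.injEq] at hR
      obtain ⟨rfl, rfl⟩ := hR
      refine ⟨X ++ [r], Y', Z, a, b, by simp, ?_⟩
      rcases hcond with ⟨h1, h2⟩ | ⟨h1, h2⟩
      · exact Or.inl ⟨h1, fun q hq => h2 q (List.mem_cons_of_mem _ hq)⟩
      · exact Or.inr ⟨h1, fun q hq => h2 q (List.mem_cons_of_mem _ hq)⟩
  · -- a strictly before the swap position
    subst hm1
    rcases cons_middle_cases hm2 with ⟨rfl, rfl, hZ⟩ | ⟨m2, hm21, hm22⟩ | ⟨m2, hm21, hm22⟩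
    · -- b = t
      subst hZ
      refine ⟨X, Y ++ [s], y0, a, b, by simp, ?_⟩
      rcases hcond with ⟨h1, h2⟩ | ⟨h1, h2⟩
      · refine Or.inl ⟨h1, fun q hq => ?_⟩
        rcases (by simpa using hq : q ∈ Y ∨ q = s) with hq | rfl
        · exact h2 q hq
        · exact (comm_shrink_right h1 hc).symm'
      · refine Or.inr ⟨h1, fun q hq => ?_⟩
        rcases (by simpa using hq : q ∈ Y ∨ q = s) with hq | rfl
        · exact h2 q hq
        · exact hc.symm'
    · -- b strictly before the swap position too
      subst hm21 hm22
      exact ⟨X, Y, m2 ++ s :: t :: y0, a, b, by simp, hcond⟩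
    · -- t strictly between a and b
      subst hm21
      cases m2 with
      | nil =>
        simp only [List.nil_append, List.cons.injEq] at hm22
        obtain ⟨rfl, rfl⟩ := hm22
        refine ⟨X, m, t :: y0, a, s, by simp, ?_⟩
        rcases hcond with ⟨h1, h2⟩ | ⟨h1, h2⟩
        · exact Or.inl ⟨h1, fun q hq => h2 q (by simp [hq])⟩
        · exact Or.inr ⟨h1, fun q hq => h2 q (by simp [hq])⟩
      | cons r m3 =>
        simp only [List.cons_append, List.cons.injEq] at hm22
        obtain ⟨rfl, rfl⟩ := hm22
        refine ⟨X, m ++ s :: t :: m3, Z, a, b, by simp, ?_⟩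
        rcases hcond with ⟨h1, h2⟩ | ⟨h1, h2⟩
        · refine Or.inl ⟨h1, fun q hq => h2 q ?_⟩
          simp only [List.mem_append, List.mem_cons] at hq ⊢
          tauto
        · refine Or.inr ⟨h1, fun q hq => h2 q ?_⟩
          simp only [List.mem_append, List.mem_cons] at hq ⊢
          tauto
  · -- a at or after the right swap position
    subst hm1
    cases m with
    | nil =>
      simp only [List.nil_append, List.cons.injEq] at hm2
      obtain ⟨rfl, rfl⟩ := hm2
      refine ⟨x, t :: Y, Z, s, b, by simp, ?_⟩
      rcases hcond with ⟨h1, h2⟩ | ⟨h1, h2⟩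
      · refine Or.inl ⟨h1, fun q hq => ?_⟩
        rcases List.mem_cons.mp hq with rfl | hq
        · exact hc
        · exact h2 q hq
      · refine Or.inr ⟨h1, fun q hq => ?_⟩
        rcases List.mem_cons.mp hq with rfl | hq
        · exact comm_shrink_left h1 hc
        · exact h2 q hq
    | cons r m2 =>
      simp only [List.cons_append, List.cons.injEq] at hm2
      obtain ⟨rfl, rfl⟩ := hm2
      exact ⟨x ++ s :: t :: m2, Y, Z, a, b, by simp, hcond⟩

theorem Reduced.of_swap {w w' : Word N} (h : SwapStep w w') (hr : Reduced w) : Reduced w' :=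
  by_contra fun h' => (not_reduced_of_swap h h') hr

theorem Reduced.of_wequiv {w w' : Word N} (h : WEquiv w w') (hr : Reduced w) : Reduced w' := by
  induction h with
  | refl => exact hr
  | tail _ h2 ih => exact ih.of_swap h2

end PS
namespace PS

variable {N : ℕ}

/-! ### Repl basics -/

/-- `Repl` with an unspecified flag. -/
def ReplE (v u : Word N) : Prop := ∃ b, Repl v u b

theorem repl_refl (v : Word N) : Repl v v false := by
  induction v with
  | nil => exact Repl.nil
  | cons s v ih => exact Repl.keep s ih

theorem replE_refl (v : Word N) : ReplE v v := ⟨false, repl_refl v⟩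

theorem repl_false_eq {v u : Word N} {b : Bool} (h : Repl v u b) (hb : b = false) : u = v := by
  induction h with
  | nil => rfl
  | keep s h ih => rw [ih hb]
  | split s l hl h ih => exact absurd hb (by simp)

theorem repl_append {v1 u1 v2 u2 : Word N} {b1 b2 : Bool}
    (h1 : Repl v1 u1 b1) (h2 : Repl v2 u2 b2) : ReplE (v1 ++ v2) (u1 ++ u2) := by
  induction h1 with
  | nil => exact ⟨b2, by simpa using h2⟩
  | keep s h ih => obtain ⟨b, hb⟩ := ih; exact ⟨b, Repl.keep s hb⟩
  | split s l hl h ih =>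
    obtain ⟨b, hb⟩ := ih
    refine ⟨true, ?_⟩
    rw [List.append_assoc]
    exact Repl.split s l hl hb

theorem replE_append {v1 u1 v2 u2 : Word N} (h1 : ReplE v1 u1) (h2 : ReplE v2 u2) :
    ReplE (v1 ++ v2) (u1 ++ u2) := by
  obtain ⟨b1, h1⟩ := h1; obtain ⟨b2, h2⟩ := h2; exact repl_append h1 h2

theorem repl_append_inv {v1 v2 u : Word N} {b : Bool} (h : Repl (v1 ++ v2) u b) :
    ∃ u1 u2 b1 b2, u = u1 ++ u2 ∧ Repl v1 u1 b1 ∧ Repl v2 u2 b2 := by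
  induction v1 generalizing u b with
  | nil => exact ⟨[], u, false, b, by simp, Repl.nil, h⟩
  | cons s v1 ih =>
    cases h with
    | keep _ h =>
      obtain ⟨u1, u2, b1, b2, rfl, h1, h2⟩ := ih h
      exact ⟨s :: u1, u2, b1, b2, rfl, Repl.keep s h1, h2⟩
    | split _ l hl h =>
      obtain ⟨u1, u2, b1, b2, rfl, h1, h2⟩ := ih h
      exact ⟨l ++ u1, u2, true, b2, by rw [List.append_assoc], Repl.split s l hl h1, h2⟩

theorem repl_mem {v u : Word N} {b : Bool} (h : Repl v u b) :
    ∀ r ∈ u, ∃ t ∈ v, r = t ∨ PSub r t := by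
  induction h with
  | nil => simp
  | keep s h ih =>
    intro r hr
    rcases List.mem_cons.mp hr with rfl | hr
    · exact ⟨r, by simp, Or.inl rfl⟩
    · obtain ⟨t, ht, hrt⟩ := ih r hr
      exact ⟨t, List.mem_cons_of_mem _ ht, hrt⟩
  | split s l hl h ih =>
    intro r hr
    rcases List.mem_append.mp hr with hr | hr
    · exact ⟨s, by simp, Or.inr (hl r hr)⟩
    · obtain ⟨t, ht, hrt⟩ := ih r hr
      exact ⟨t, List.mem_cons_of_mem _ ht, hrt⟩

theorem repl_sub_trans {l p : Word N} {b : Bool} {s : Letter N}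
    (h : Repl l p b) (hl : ∀ t ∈ l, PSub t s) : ∀ r ∈ p, PSub r s := by
  intro r hr
  obtain ⟨t, ht, hrt⟩ := repl_mem h r hr
  rcases hrt with rfl | hp
  · exact hl r ht
  · exact psub_sub hp (hl t ht).1

theorem repl_trans {v m : Word N} {b1 : Bool} (h1 : Repl v m b1) :
    ∀ {u : Word N} {b2 : Bool}, Repl m u b2 → ReplE v u := by
  induction h1 with
  | nil =>
    intro u b2 h2
    cases h2
    exact ⟨false, Repl.nil⟩
  | keep s h ih =>
    intro u b2 h2
    cases h2 with
    | keep _ h2 => obtain ⟨b, hb⟩ := ih h2; exact ⟨b, Repl.keep s hb⟩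
    | split _ l hl h2 => obtain ⟨b, hb⟩ := ih h2; exact ⟨true, Repl.split s l hl hb⟩
  | split s l hl h ih =>
    intro u b2 h2
    obtain ⟨u1, u2, b1', b2', rfl, hA, hB⟩ := repl_append_inv h2
    obtain ⟨b, hb⟩ := ih hB
    exact ⟨true, Repl.split s u1 (repl_sub_trans hA hl) hb⟩

theorem replE_trans {v m u : Word N} (h1 : ReplE v m) (h2 : ReplE m u) : ReplE v u := by
  obtain ⟨b1, h1⟩ := h1; obtain ⟨b2, h2⟩ := h2; exact repl_trans h1 h2

end PS
namespace PS

variable {N : ℕ}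

/-! ### Swaps commute with Repl -/

theorem block_comm {T S : Word N} {s t : Letter N} (hc : Comm s t)
    (hT : ∀ r ∈ T, Sub r t) (hS : ∀ r ∈ S, Sub r s) :
    ∀ r ∈ T, ∀ r' ∈ S, Comm r r' := fun r hr r' hr' =>
  (comm_shrink (hS r' hr') (hT r hr) hc).symm'

theorem repl_cons_inv {s : Letter N} {v u : Word N} {b : Bool} (h : Repl (s :: v) u b) :
    (∃ u', u = s :: u' ∧ ∃ b', Repl v u' b') ∨
    (∃ l u', u = l ++ u' ∧ (∀ t ∈ l, PSub t s) ∧ ∃ b', Repl v u' b') := by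
  cases h with
  | keep _ h => exact Or.inl ⟨_, rfl, _, h⟩
  | split _ l hl h => exact Or.inr ⟨l, _, rfl, hl, _, h⟩

theorem swap_repl {m m' p : Word N} (hs : SwapStep m m') (hp : ReplE m' p) :
    ∃ p', ReplE m p' ∧ WEquiv p p' := by
  obtain ⟨x, y, s, t, hc, hm, hm'⟩ := hs
  subst hm hm'
  obtain ⟨b, hb⟩ := hp
  obtain ⟨p1, p2, b1, b2, rfl, h1, h2⟩ := repl_append_inv hb
  -- h2 : Repl (t :: s :: y) p2 b2 ; extract the image blocks of t and s
  have key : ∃ T S u3, p2 = T ++ (S ++ u3) ∧ (∀ r ∈ T, Sub r t) ∧ (∀ r ∈ S, Sub r s) ∧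
      ReplE (s :: t :: y) (S ++ (T ++ u3)) := by
    rcases repl_cons_inv h2 with ⟨u, rfl, b', h3⟩ | ⟨lt, u, rfl, hlt, b', h3⟩
    · rcases repl_cons_inv h3 with ⟨u3, rfl, b'', h4⟩ | ⟨ls, u3, rfl, hls, b'', h4⟩
      · exact ⟨[t], [s], u3, by simp, by simpa using Sub.rfl', by simpa using Sub.rfl',
          ⟨_, Repl.keep s (Repl.keep t h4)⟩⟩
      · exact ⟨[t], ls, u3, by simp, by simpa using Sub.rfl', fun r hr => (hls r hr).1,
          ⟨_, Repl.split s ls hls (Repl.keep t h4)⟩⟩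
    · rcases repl_cons_inv h3 with ⟨u3, rfl, b'', h4⟩ | ⟨ls, u3, rfl, hls, b'', h4⟩
      · exact ⟨lt, [s], u3, by simp, fun r hr => (hlt r hr).1, by simpa using Sub.rfl',
          ⟨_, Repl.keep s (Repl.split t lt hlt h4)⟩⟩
      · exact ⟨lt, ls, u3, by simp, fun r hr => (hlt r hr).1, fun r hr => (hls r hr).1,
          ⟨_, Repl.split s ls hls (Repl.split t lt hlt h4)⟩⟩
  obtain ⟨T, S, u3, rfl, hT, hS, hrepl⟩ := key
  refine ⟨p1 ++ (S ++ (T ++ u3)), replE_append ⟨b1, h1⟩ hrepl, ?_⟩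
  exact wequiv_block_swap p1 u3 T S (block_comm hc hT hS)

theorem wequiv_replE {m m' p : Word N} (h : WEquiv m m') (hp : ReplE m p) :
    ∃ p', ReplE m' p' ∧ WEquiv p p' := by
  induction h with
  | refl => exact ⟨p, hp, WEquiv.refl' p⟩
  | tail _ h2 ih =>
    obtain ⟨p1, hp1, hw1⟩ := ih
    obtain ⟨p', hp', hw'⟩ := swap_repl h2.symm' hp1
    exact ⟨p', hp', hw1.trans' hw'⟩

/-! ### The auxiliary order -/

/-- `a` is below `q`: a commutation-permutation of `a` is obtained from `q` by a
(possibly trivial) replacement. -/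
def PreceqAux (a q : Word N) : Prop := ∃ a', WEquiv a a' ∧ ReplE q a'

theorem preceqAux_of_wequiv {a q : Word N} (h : WEquiv a q) : PreceqAux a q :=
  ⟨q, h, replE_refl q⟩

theorem preceqAux_refl (a : Word N) : PreceqAux a a :=
  preceqAux_of_wequiv (WEquiv.refl' a)

theorem preceqAux_trans {a m q : Word N} (h1 : PreceqAux a m) (h2 : PreceqAux m q) :
    PreceqAux a q := by
  obtain ⟨a', hw1, hr1⟩ := h1
  obtain ⟨m', hw2, hr2⟩ := h2
  obtain ⟨a'', hr3, hw3⟩ := wequiv_replE hw2 hr1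
  exact ⟨a'', hw1.trans' hw3, replE_trans hr2 hr3⟩

theorem preceqAux_of_cancel {q a : Word N} (h : CancelStep q a) : PreceqAux a q := by
  obtain ⟨x, y, s, t, hst, hq, rfl⟩ := h
  refine ⟨x ++ s :: y, WEquiv.refl' _, ?_⟩
  rcases hq with rfl | rfl
  · exact replE_append (replE_refl x) ⟨true, Repl.keep s (Repl.split t [] (by simp) (repl_refl y))⟩
  · exact replE_append (replE_refl x) ⟨true, Repl.split t [] (by simp) (Repl.keep s (repl_refl y))⟩

theorem preceqAux_of_red {q a : Word N} (h : Red q a) : PreceqAux a q := by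
  induction h with
  | refl => exact preceqAux_refl q
  | tail _ h2 ih =>
    refine preceqAux_trans ?_ ih
    rcases h2 with h2 | h2
    · exact preceqAux_of_wequiv (wequiv_single h2.symm')
    · exact preceqAux_of_cancel h2

theorem preceqAux_append_left (w : Word N) {u v : Word N} (h : PreceqAux u v) :
    PreceqAux (w ++ u) (w ++ v) := by
  obtain ⟨u', hw, hr⟩ := h
  exact ⟨w ++ u', wequiv_append_left w hw, replE_append (replE_refl w) hr⟩

theorem preceqAux_append_right (w : Word N) {u v : Word N} (h : PreceqAux u v) :
    PreceqAux (u ++ w) (v ++ w) := by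
  obtain ⟨u', hw, hr⟩ := h
  exact ⟨u' ++ w, wequiv_append_right w hw, replE_append hr (replE_refl w)⟩

theorem preceqAux_of_preceq {u v : Word N} (h : Preceq u v) : PreceqAux u v := by
  rcases h with ⟨u', hw, hr⟩ | h
  · exact ⟨u', hw, ⟨true, hr⟩⟩
  · exact preceqAux_of_wequiv h

theorem preceq_of_preceqAux {a q : Word N} (h : PreceqAux a q) : Preceq a q := by
  obtain ⟨a', hw, b, hr⟩ := h
  cases b with
  | true => exact Or.inl ⟨a', hw, hr⟩
  | false => exact Or.inr (by rw [← repl_false_eq hr rfl]; exact hw)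

end PS
namespace PS

variable {N : ℕ}

/-! ### Preservation of the auxiliary order along reductions -/

theorem swap_preserve {a q q' : Word N} (hp : PreceqAux a q) (hs : SwapStep q q') :
    PreceqAux a q' := by
  obtain ⟨a', hw, hr⟩ := hp
  obtain ⟨a'', hr', hw'⟩ := swap_repl hs.symm' hr
  exact ⟨a'', hw.trans' hw', hr'⟩

theorem cancel_preserve {a q q' : Word N} (hra : Reduced a) (hp : PreceqAux a q)
    (hcs : CancelStep q q') : PreceqAux a q' := by
  obtain ⟨a', hw, hr⟩ := hp
  have hra' : Reduced a' := hra.of_wequiv hw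
  obtain ⟨x, y, s, t, hst, hq, rfl⟩ := hcs
  obtain ⟨b0, hb⟩ := hr
  rcases hq with rfl | rfl
  · obtain ⟨A, B, b1, h1b, rfl, h1, h2⟩ := repl_append_inv hb
    rcases repl_cons_inv h2 with ⟨u, rfl, _, h3⟩ | ⟨ls, u, rfl, hls, _, h3⟩
    · rcases repl_cons_inv h3 with ⟨C, rfl, _, h4⟩ | ⟨lt, C, rfl, hlt, _, h4⟩
      · -- a' = A ++ s :: t :: C : forbidden adjacency
        exact absurd hra' (not_reduced_adj rfl (Or.inr hst))
      · cases lt with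
        | nil => exact ⟨_, hw, replE_append ⟨b1, h1⟩ ⟨_, Repl.keep s h4⟩⟩
        | cons r lt' =>
          exact absurd hra'
            (not_reduced_adj rfl (Or.inr (psub_sub (hlt r (by simp)) hst).1))
    · rcases repl_cons_inv h3 with ⟨C, rfl, _, h4⟩ | ⟨lt, C, rfl, hlt, _, h4⟩
      · by_cases hts : t = s
        · subst hts
          rcases List.eq_nil_or_concat ls with rfl | ⟨L, r, rfl⟩
          · exact ⟨_, hw, replE_append ⟨b1, h1⟩ ⟨_, Repl.keep t h4⟩⟩
          · refine absurd hra'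
              (not_reduced_adj (A := A ++ L) (C := C) ?_ (Or.inl (hls r (by simp)).1))
            simp
        · refine ⟨_, hw, ?_⟩
          have hsub : ∀ r ∈ ls ++ [t], PSub r s := by
            intro r hrr
            rcases List.mem_append.mp hrr with hrr | hrr
            · exact hls r hrr
            · simp only [List.mem_singleton] at hrr
              subst hrr
              exact ⟨hst, hts⟩
          have := replE_append (v2 := s :: y) ⟨b1, h1⟩ ⟨_, Repl.split s (ls ++ [t]) hsub h4⟩
          simpa [List.append_assoc] using this
      · refine ⟨_, hw, ?_⟩
        have hsub : ∀ r ∈ ls ++ lt, PSub r s := by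
          intro r hrr
          rcases List.mem_append.mp hrr with hrr | hrr
          · exact hls r hrr
          · exact psub_sub (hlt r hrr) hst
        have := replE_append (v2 := s :: y) ⟨b1, h1⟩ ⟨_, Repl.split s (ls ++ lt) hsub h4⟩
        simpa [List.append_assoc] using this
  · obtain ⟨A, B, b1, h1b, rfl, h1, h2⟩ := repl_append_inv hb
    rcases repl_cons_inv h2 with ⟨u, rfl, _, h3⟩ | ⟨lt, u, rfl, hlt, _, h3⟩
    · rcases repl_cons_inv h3 with ⟨C, rfl, _, h4⟩ | ⟨ls, C, rfl, hls, _, h4⟩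
      · -- a' = A ++ t :: s :: C : forbidden adjacency
        exact absurd hra' (not_reduced_adj rfl (Or.inl hst))
      · by_cases hts : t = s
        · subst hts
          cases ls with
          | nil => exact ⟨_, hw, replE_append ⟨b1, h1⟩ ⟨_, Repl.keep t h4⟩⟩
          | cons r ls' =>
            exact absurd hra' (not_reduced_adj rfl (Or.inr (hls r (by simp)).1))
        · refine ⟨_, hw, ?_⟩
          have hsub : ∀ r ∈ t :: ls, PSub r s := by
            intro r hrr
            rcases List.mem_cons.mp hrr with rfl | hrr
            · exact ⟨hst, hts⟩
            · exact hls r hrr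
          exact replE_append ⟨b1, h1⟩ ⟨_, Repl.split s (t :: ls) hsub h4⟩
    · rcases repl_cons_inv h3 with ⟨C, rfl, _, h4⟩ | ⟨ls, C, rfl, hls, _, h4⟩
      · rcases List.eq_nil_or_concat lt with rfl | ⟨L, r, rfl⟩
        · exact ⟨_, hw, replE_append ⟨b1, h1⟩ ⟨_, Repl.keep s h4⟩⟩
        · refine absurd hra'
            (not_reduced_adj (A := A ++ L) (C := C) ?_ (Or.inl (psub_sub (hlt r (by simp)) hst).1))
          simp
      · refine ⟨_, hw, ?_⟩
        have hsub : ∀ r ∈ lt ++ ls, PSub r s := by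
          intro r hrr
          rcases List.mem_append.mp hrr with hrr | hrr
          · exact psub_sub (hlt r hrr) hst
          · exact hls r hrr
        have := replE_append (v2 := s :: y) ⟨b1, h1⟩ ⟨_, Repl.split s (lt ++ ls) hsub h4⟩
        simpa [List.append_assoc] using this

theorem red_preserve {a q q' : Word N} (hra : Reduced a) (hp : PreceqAux a q)
    (h : Red q q') : PreceqAux a q' := by
  induction h with
  | refl => exact hp
  | tail _ h2 ih =>
    rcases h2 with h2 | h2
    · exact swap_preserve ih h2
    · exact cancel_preserve hra ih h2

end PS
open PS in
/-- The order `⪯` on Γ is compatible with multiplication. -/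
theorem preceq_compatible_with_mul {N : ℕ} (u v w : Word N)
    (hu : Reduced u) (hv : Reduced v) (hw : Reduced w)
    (h : Preceq u v) :
    (∀ a b : Word N, Red (w ++ u) a → Reduced a → Red (w ++ v) b → Reduced b →
      Preceq a b) ∧
    (∀ a b : Word N, Red (u ++ w) a → Reduced a → Red (v ++ w) b → Reduced b →
      Preceq a b) := by
  have h' := preceqAux_of_preceq h
  constructor
  · intro a b hau hra hbv hrb
    refine preceq_of_preceqAux ?_
    have p1 : PreceqAux (w ++ u) (w ++ v) := preceqAux_append_left w h'
    have p2 : PreceqAux a (w ++ u) := preceqAux_of_red hau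
    exact red_preserve hra (preceqAux_trans p2 p1) hbv
  · intro a b hau hra hbv hrb
    refine preceq_of_preceqAux ?_
    have p1 : PreceqAux (u ++ w) (v ++ w) := preceqAux_append_right w h'
    have p2 : PreceqAux a (u ++ w) := preceqAux_of_red hau
    exact red_preserve hra (preceqAux_trans p2 p1) hbv
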